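/- arXiv:1912.11825 — 5 statements merged into one kernel-verified Lean document; each statement's English description precedes it below -/
import Mathlib

section
/- Let d ≥ 1 be an integer, let α be a real number with α > d, and let ε_1, …, ε_d be real numbers with 0 < ε_j < 1 for every j. Then the function r = (r_1, …, r_d) ↦ 1 / ( (∏_{j=1}^d r_j) · (log ∏_{j=1}^d (1/r_j))^α ) is integrable with respect to Lebesgue measure on the open box ∏_{j=1}^d (0, ε_j) ⊆ ℝ^d; in other words ∫_0^{ε_d} ⋯ ∫_0^{ε_1} dr / ( ∏_{j=1}^d r_j · log^α ∏_{j=1}^d (1/r_j) ) < ∞. -/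
open MeasureTheory

/-- One-dimensional model integral: `∫_0^ε dr / (r (-log r)^β) < ∞` when `β > 1`, `0 < ε < 1`. -/
lemma oneDim_integrable {β ε : ℝ} (hβ : 1 < β) (hε0 : 0 < ε) (hε1 : ε < 1) :
    IntegrableOn (fun r : ℝ => (r * (-Real.log r) ^ β)⁻¹) (Set.Ioo 0 ε) := by
  have hlogε : Real.log ε < 0 := Real.log_neg hε0 hε1
  set a : ℝ := -Real.log ε with ha_def
  have ha : 0 < a := by simpa [ha_def] using neg_pos.2 hlogε
  have himg : (fun t : ℝ => Real.exp (-t)) '' Set.Ioi a = Set.Ioo 0 ε := by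
    ext x
    constructor
    · rintro ⟨t, ht, rfl⟩
      refine ⟨Real.exp_pos _, ?_⟩
      rw [show ε = Real.exp (Real.log ε) from (Real.exp_log hε0).symm]
      exact Real.exp_lt_exp.2 (by simp only [Set.mem_Ioi] at ht; linarith)
    · rintro ⟨hx0, hxε⟩
      refine ⟨-Real.log x, ?_, by simp [Real.exp_log hx0]⟩
      have : Real.log x < Real.log ε := Real.log_lt_log hx0 hxε
      simp only [Set.mem_Ioi, ha_def]
      linarith
  have hderiv : ∀ t ∈ Set.Ioi a, HasDerivWithinAt (fun t : ℝ => Real.exp (-t))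
      (-Real.exp (-t)) (Set.Ioi a) t := by
    intro t _
    simpa [Function.comp_def] using ((Real.hasDerivAt_exp (-t)).comp t (hasDerivAt_neg t)).hasDerivWithinAt
  have hinj : Set.InjOn (fun t : ℝ => Real.exp (-t)) (Set.Ioi a) :=
    fun x _ y _ h => by
      have := Real.exp_injective h
      linarith [neg_injective this]
  rw [← himg, integrableOn_image_iff_integrableOn_abs_deriv_smul measurableSet_Ioi hderiv hinj]
  have : IntegrableOn (fun t : ℝ => t ^ (-β)) (Set.Ioi a) :=
    integrableOn_Ioi_rpow_of_lt (by linarith) ha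
  refine this.congr_fun (fun t ht => ?_) measurableSet_Ioi
  have ht0 : 0 < t := lt_trans ha ht
  have hexp : 0 < Real.exp (-t) := Real.exp_pos _
  rw [Real.log_exp]
  simp only [smul_eq_mul, abs_neg, abs_of_pos hexp, neg_neg]
  rw [mul_inv, ← mul_assoc, mul_inv_cancel₀ hexp.ne', one_mul, Real.rpow_neg ht0.le]


/-- For `d ≥ 1`, `α > d` and `0 < ε_j < 1`, the function
`r ↦ 1 / ((∏ r_j) · (log ∏ (1/r_j))^α)` is Lebesgue-integrable on the box `∏ (0, ε_j)`. -/
theorem stmt_0 (d : ℕ) (hd : 1 ≤ d) (α : ℝ) (hα : (d : ℝ) < α)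
    (ε : Fin d → ℝ) (hε : ∀ j, 0 < ε j ∧ ε j < 1) :
    IntegrableOn
      (fun r : Fin d → ℝ =>
        ((∏ j, r j) * Real.log (∏ j, (r j)⁻¹) ^ α)⁻¹)
      (Set.univ.pi fun j => Set.Ioo (0 : ℝ) (ε j)) := by
  have hd0 : (0 : ℝ) < d := by exact_mod_cast hd
  set β : ℝ := α / d with hβ_def
  have hβ : 1 < β := (one_lt_div hd0).2 hα
  have hβα : β * d = α := div_mul_cancel₀ α hd0.ne'
  set F : Fin d → ℝ → ℝ := fun j =>
    (Set.Ioo (0:ℝ) (ε j)).indicator (fun r => (r * (-Real.log r) ^ β)⁻¹) with hF_def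
  have hFint : ∀ j, Integrable (F j) := fun j =>
    (integrable_indicator_iff measurableSet_Ioo).2
      (oneDim_integrable hβ (hε j).1 (hε j).2)
  have hG : Integrable (fun x : Fin d → ℝ => ∏ j, F j (x j)) :=
    Integrable.fintype_prod hFint
  have hboxm : MeasurableSet (Set.univ.pi fun j => Set.Ioo (0:ℝ) (ε j)) :=
    MeasurableSet.univ_pi fun j => measurableSet_Ioo
  have hmeas : Measurable (fun r : Fin d → ℝ =>
      ((∏ j, r j) * Real.log (∏ j, (r j)⁻¹) ^ α)⁻¹) := by
    apply Measurable.inv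
    apply Measurable.mul
    · exact Finset.measurable_prod _ fun j _ => measurable_pi_apply j
    · measurability
  refine Integrable.mono' hG.integrableOn (hmeas.aestronglyMeasurable.restrict) ?_
  rw [ae_restrict_iff' hboxm]
  refine Filter.Eventually.of_forall fun x hx => ?_
  simp only [Set.mem_pi, Set.mem_univ, forall_true_left] at hx
  have hx0 : ∀ j, 0 < x j := fun j => (hx j).1
  have hx1 : ∀ j, x j < 1 := fun j => lt_trans (hx j).2 (hε j).2
  have hlog : ∀ j, 0 < -Real.log (x j) := fun j =>
    neg_pos.2 (Real.log_neg (hx0 j) (hx1 j))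
  have hP : 0 < ∏ j, x j := Finset.prod_pos fun j _ => hx0 j
  set S : ℝ := ∑ j, -Real.log (x j) with hS_def
  have hS : 0 < S := Finset.sum_pos (fun j _ => hlog j)
    (Finset.univ_nonempty_iff.2 ⟨⟨0, hd⟩⟩)
  have hlogprod : Real.log (∏ j, (x j)⁻¹) = S := by
    rw [Real.log_prod fun j _ => inv_ne_zero (hx0 j).ne']
    simp only [Real.log_inv, hS_def]
  -- key inequality: ∏ (-log x j)^β ≤ S^α
  have hkey : ∏ j, (-Real.log (x j)) ^ β ≤ S ^ α := by
    have h1 : ∏ j, (-Real.log (x j)) ^ β ≤ ∏ j : Fin d, S ^ β := by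
      refine Finset.prod_le_prod (fun j _ => Real.rpow_nonneg (hlog j).le β) fun j _ => ?_
      exact Real.rpow_le_rpow (hlog j).le
        (Finset.single_le_sum (fun i _ => (hlog i).le) (Finset.mem_univ j))
        (by linarith : (0:ℝ) ≤ β)
    calc ∏ j, (-Real.log (x j)) ^ β ≤ ∏ j : Fin d, S ^ β := h1
    _ = (S ^ β) ^ (d : ℕ) := by rw [Finset.prod_const, Finset.card_univ, Fintype.card_fin]
    _ = S ^ α := by
        rw [← Real.rpow_natCast (S ^ β) d, ← Real.rpow_mul hS.le, hβα]
  have hGx : (∏ j, F j (x j)) = ((∏ j, x j) * ∏ j, (-Real.log (x j)) ^ β)⁻¹ := by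
    rw [← Finset.prod_mul_distrib, ← Finset.prod_inv_distrib]
    exact Finset.prod_congr rfl fun j _ => Set.indicator_of_mem (hx j) _
  have hprodβ : 0 < ∏ j, (-Real.log (x j)) ^ β :=
    Finset.prod_pos fun j _ => Real.rpow_pos_of_pos (hlog j) β
  rw [hlogprod, hGx]
  rw [Real.norm_eq_abs, abs_of_nonneg (by positivity)]
  apply inv_anti₀ (by positivity)
  exact mul_le_mul_of_nonneg_left hkey hP.le
end

section
/- Let v ⊆ V be a 2-dimensional subspace with Q(x) < 0 for every nonzero x ∈ v, and let z ∈ V be a nonzero vector with Q(z) = 0. Then there exist exactly two pairs (X,Y) ∈ v × v satisfying the four conditions B(X,X) = B(Y,Y), B(X,Y) = 0, B(X,z) = 1 and B(Y,z) = 0; these two pairs have the same first component and opposite second components, i.e. they are of the form (X,Y) and (X,−Y) with Y ≠ 0, and for each of them (X,Y) is a basis of v with B(X,X) = B(Y,Y) < 0. -/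
/-- In a real quadratic space of signature `(n,2)` (given by an orthogonal
decomposition `V = P ⊕ N` as below), let `v` be a 2-dimensional negative definite
subspace and let `z ≠ 0` be isotropic. Then there are exactly two pairs
`(X,Y) ∈ v × v` with `B(X,X) = B(Y,Y)`, `B(X,Y) = 0`, `B(X,z) = 1`, `B(Y,z) = 0`;
they have the same first component and opposite second components `(X,Y)`, `(X,−Y)`
with `Y ≠ 0`, and `(X,Y)` is a basis of `v` with `B(X,X) = B(Y,Y) < 0`. -/
theorem stmt_10 {V : Type*} [AddCommGroup V] [Module ℝ V] [FiniteDimensional ℝ V]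
    (B : LinearMap.BilinForm ℝ V) (hBsymm : ∀ x y : V, B x y = B y x)
    (P N : Submodule ℝ V) (hcompl : IsCompl P N)
    (horth : ∀ p ∈ P, ∀ q ∈ N, B p q = 0)
    (hP : ∀ p ∈ P, p ≠ 0 → 0 < B p p)
    (hN : ∀ q ∈ N, q ≠ 0 → B q q < 0)
    (hdimN : Module.finrank ℝ N = 2)
    (v : Submodule ℝ V) (hvdim : Module.finrank ℝ v = 2)
    (hv : ∀ x ∈ v, x ≠ 0 → B x x < 0)
    (z : V) (hz0 : z ≠ 0) (hzz : B z z = 0) :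
    ∃ X Y : V, X ∈ v ∧ Y ∈ v ∧ Y ≠ 0 ∧
      B X X = B Y Y ∧ B X Y = 0 ∧ B X z = 1 ∧ B Y z = 0 ∧ B X X < 0 ∧
      LinearIndependent ℝ ![X, Y] ∧ Submodule.span ℝ ({X, Y} : Set V) = v ∧
      ∀ X' Y' : V, X' ∈ v → Y' ∈ v → B X' X' = B Y' Y' → B X' Y' = 0 →
        B X' z = 1 → B Y' z = 0 → X' = X ∧ (Y' = Y ∨ Y' = -Y) := by
  -- basic facts about negative definiteness on v
  have hzero : ∀ x ∈ v, B x x = 0 → x = 0 := by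
    intro x hx h
    by_contra h0
    exact absurd h (ne_of_lt (hv x hx h0))
  have hvneg : ∀ x ∈ v, B x x ≤ 0 := by
    intro x hx
    by_cases h : x = 0
    · simp [h]
    · exact (hv x hx h).le
  have hzv : z ∉ v := fun hzv => hz0 (hzero z hzv hzz)
  -- Step 1: the functional B(·, z) is nonzero on v
  have hwex : ∃ w ∈ v, B w z ≠ 0 := by
    by_contra hcon
    push_neg at hcon
    set W := v ⊔ Submodule.span ℝ {z} with hW
    have hWneg : ∀ x ∈ W, B x x ≤ 0 := by
      intro x hxW
      obtain ⟨w, hw, y, hy, rfl⟩ := Submodule.mem_sup.mp hxW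
      obtain ⟨t, rfl⟩ := Submodule.mem_span_singleton.mp hy
      have h1 : B w z = 0 := hcon w hw
      have h2 : B z w = 0 := by rw [hBsymm]; exact h1
      have : B (w + t • z) (w + t • z) = B w w := by
        simp [map_add, map_smul, LinearMap.add_apply, LinearMap.smul_apply,
          smul_eq_mul, h1, h2, hzz]
      rw [this]
      exact hvneg w hw
    have hWP : Disjoint W P := by
      rw [Submodule.disjoint_def]
      intro x hxW hxP
      by_contra hx0
      exact absurd (hWneg x hxW) (not_le.mpr (hP x hxP hx0))
    -- finrank W = 3
    have hdisj : Disjoint v (Submodule.span ℝ {z}) :=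
      Submodule.disjoint_span_singleton.mpr (fun h => absurd h hzv)
    have h1 : Module.finrank ℝ W + Module.finrank ℝ (v ⊓ Submodule.span ℝ {z} : Submodule ℝ V)
        = Module.finrank ℝ v + Module.finrank ℝ (Submodule.span ℝ {z} : Submodule ℝ V) :=
      Submodule.finrank_sup_add_finrank_inf_eq v (Submodule.span ℝ {z})
    rw [disjoint_iff] at hdisj
    rw [hdisj, finrank_bot, hvdim, finrank_span_singleton hz0] at h1
    have hWrank : Module.finrank ℝ W = 3 := by omega
    -- dimension count contradiction
    rw [disjoint_iff] at hWP
    have h2 : Module.finrank ℝ (W ⊔ P : Submodule ℝ V) + Module.finrank ℝ (W ⊓ P : Submodule ℝ V)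
        = Module.finrank ℝ W + Module.finrank ℝ P :=
      Submodule.finrank_sup_add_finrank_inf_eq W P
    rw [hWP, finrank_bot, hWrank] at h2
    have h3 : Module.finrank ℝ (W ⊔ P : Submodule ℝ V) ≤ Module.finrank ℝ V :=
      Submodule.finrank_le _
    have h4 : Module.finrank ℝ P + Module.finrank ℝ N = Module.finrank ℝ V :=
      Submodule.finrank_add_eq_of_isCompl hcompl
    omega
  -- a linearly independent pair in v spans v
  have hspan : ∀ u₁ u₂ : V, u₁ ∈ v → u₂ ∈ v → LinearIndependent ℝ ![u₁, u₂] →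
      Submodule.span ℝ ({u₁, u₂} : Set V) = v := by
    intro u₁ u₂ h1 h2 hind
    apply Submodule.eq_of_le_of_finrank_le
    · rw [Submodule.span_le]
      intro x hx
      rcases hx with rfl | hx
      · exact h1
      · rw [Set.mem_singleton_iff] at hx; subst hx; exact h2
    · rw [hvdim]
      have hr : Set.range ![u₁, u₂] = ({u₁, u₂} : Set V) := by
        simp [Matrix.range_cons]
        exact Set.pair_comm u₂ u₁
      have := finrank_span_eq_card hind
      rw [hr] at this
      rw [this]
      simp
  -- key dependence lemma: two vectors of v killed by B(·,z) are proportional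
  have hdep : ∀ u₁ u₂ : V, u₁ ∈ v → u₂ ∈ v → B u₁ z = 0 → B u₂ z = 0 → u₂ ≠ 0 →
      ∃ s : ℝ, u₁ = s • u₂ := by
    intro u₁ u₂ h1 h2 hz1 hz2 hne
    by_cases hind : LinearIndependent ℝ ![u₁, u₂]
    · exfalso
      obtain ⟨w, hw, hwz⟩ := hwex
      have hsp := hspan u₁ u₂ h1 h2 hind
      have hwmem : w ∈ Submodule.span ℝ ({u₁, u₂} : Set V) := hsp ▸ hw
      obtain ⟨a, b, hab⟩ := Submodule.mem_span_pair.mp hwmem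
      apply hwz
      rw [← hab]
      simp [map_add, map_smul, LinearMap.add_apply, LinearMap.smul_apply, smul_eq_mul, hz1, hz2]
    · rw [LinearIndependent.pair_iff] at hind
      push_neg at hind
      obtain ⟨s, t, hst, hne'⟩ := hind
      by_cases hs : s = 0
      · exfalso
        subst hs
        simp only [zero_smul, zero_add] at hst
        rcases smul_eq_zero.mp hst with ht | h2'
        · exact (hne' rfl) ht
        · exact hne h2'
      · refine ⟨-(s⁻¹ * t), ?_⟩
        have h := congrArg (fun x => (s⁻¹ : ℝ) • x) hst
        simp only [smul_add, smul_smul, inv_mul_cancel₀ hs, one_smul, smul_zero] at h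
        have := eq_neg_of_add_eq_zero_left h
        rw [this, neg_smul]
  -- get two independent vectors spanning v
  obtain ⟨b⟩ : Nonempty (Module.Basis (Fin 2) ℝ v) := ⟨Module.finBasisOfFinrankEq ℝ v hvdim⟩
  set e₁ : V := (b 0 : V) with he₁
  set e₂ : V := (b 1 : V) with he₂
  have he₁v : e₁ ∈ v := (b 0).2
  have he₂v : e₂ ∈ v := (b 1).2
  have hli : LinearIndependent ℝ ![e₁, e₂] := by
    have h := b.linearIndependent.map' v.subtype (Submodule.ker_subtype v)
    have : ![e₁, e₂] = fun i => (v.subtype ∘ b) i := by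
      funext i
      fin_cases i <;> rfl
    rw [this]
    exact h
  have hspan12 : Submodule.span ℝ ({e₁, e₂} : Set V) = v := hspan e₁ e₂ he₁v he₂v hli
  -- combinations of e₁, e₂ vanishing only trivially
  have hcomb : ∀ c₁ c₂ : ℝ, c₁ • e₂ - c₂ • e₁ = 0 → c₁ = 0 ∧ c₂ = 0 := by
    intro c₁ c₂ h
    have h' : (-c₂) • e₁ + c₁ • e₂ = 0 := by
      rw [neg_smul]
      linear_combination (norm := module) h
    have := (LinearIndependent.pair_iff.mp hli) (-c₂) c₁ h'
    constructor
    · exact this.2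
    · have := this.1; linarith [neg_eq_zero.mp this]
  -- any x in v is a combination; functional criterion
  have hfun : ∀ u : V, (B e₁ u = 0) → (B e₂ u = 0) → ∀ x ∈ v, B x u = 0 := by
    intro u h1 h2 x hx
    have : x ∈ Submodule.span ℝ ({e₁, e₂} : Set V) := hspan12 ▸ hx
    obtain ⟨a, c, hac⟩ := Submodule.mem_span_pair.mp this
    rw [← hac]
    simp [map_add, map_smul, LinearMap.add_apply, LinearMap.smul_apply, smul_eq_mul, h1, h2]
  -- construct Y₀
  set Y₀ : V := (B e₁ z) • e₂ - (B e₂ z) • e₁ with hY₀def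
  have hY₀v : Y₀ ∈ v := Submodule.sub_mem v (Submodule.smul_mem v _ he₂v) (Submodule.smul_mem v _ he₁v)
  have hY₀z : B Y₀ z = 0 := by
    simp only [hY₀def, map_sub, map_smul, LinearMap.sub_apply, LinearMap.smul_apply, smul_eq_mul]
    ring
  have hY₀ne : Y₀ ≠ 0 := by
    intro h
    obtain ⟨h1, h2⟩ := hcomb _ _ h
    obtain ⟨w, hw, hwz⟩ := hwex
    exact hwz (hfun z h1 h2 w hw)
  have hY₀Y₀ : B Y₀ Y₀ < 0 := hv Y₀ hY₀v hY₀ne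
  -- construct X₁ orthogonal to Y₀
  set X₁ : V := (B e₁ Y₀) • e₂ - (B e₂ Y₀) • e₁ with hX₁def
  have hX₁v : X₁ ∈ v := Submodule.sub_mem v (Submodule.smul_mem v _ he₂v) (Submodule.smul_mem v _ he₁v)
  have hX₁Y₀ : B X₁ Y₀ = 0 := by
    simp only [hX₁def, map_sub, map_smul, LinearMap.sub_apply, LinearMap.smul_apply, smul_eq_mul]
    ring
  have hX₁ne : X₁ ≠ 0 := by
    intro h
    obtain ⟨h1, h2⟩ := hcomb _ _ h
    have := hfun Y₀ h1 h2 Y₀ hY₀v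
    exact absurd this (ne_of_lt hY₀Y₀)
  have hX₁z : B X₁ z ≠ 0 := by
    intro h
    obtain ⟨s, hs⟩ := hdep X₁ Y₀ hX₁v hY₀v h hY₀z hY₀ne
    have hs0 : s ≠ 0 := by
      intro h0
      rw [h0, zero_smul] at hs
      exact hX₁ne hs
    rw [hs] at hX₁Y₀
    simp only [map_smul, LinearMap.smul_apply, smul_eq_mul] at hX₁Y₀
    rcases mul_eq_zero.mp hX₁Y₀ with h' | h'
    · exact hs0 h'
    · exact absurd h' (ne_of_lt hY₀Y₀)
  -- normalize X
  set c : ℝ := B X₁ z with hcdef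
  set X : V := c⁻¹ • X₁ with hXdef
  have hXv : X ∈ v := Submodule.smul_mem v _ hX₁v
  have hXz : B X z = 1 := by
    simp only [hXdef, map_smul, LinearMap.smul_apply, smul_eq_mul]
    exact inv_mul_cancel₀ hX₁z
  have hXne : X ≠ 0 := by
    intro h
    rw [h] at hXz
    simp at hXz
  have hXX : B X X < 0 := hv X hXv hXne
  have hXY₀ : B X Y₀ = 0 := by
    simp only [hXdef, map_smul, LinearMap.smul_apply, smul_eq_mul, hX₁Y₀, mul_zero]
  -- normalize Y
  have hratio : 0 < B X X / B Y₀ Y₀ := div_pos_of_neg_of_neg hXX hY₀Y₀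
  set t : ℝ := Real.sqrt (B X X / B Y₀ Y₀) with htdef
  have ht0 : 0 < t := Real.sqrt_pos.mpr hratio
  have ht2 : t ^ 2 = B X X / B Y₀ Y₀ := Real.sq_sqrt hratio.le
  set Y : V := t • Y₀ with hYdef
  have hYv : Y ∈ v := Submodule.smul_mem v _ hY₀v
  have hYne : Y ≠ 0 := smul_ne_zero (ne_of_gt ht0) hY₀ne
  have hYY : B Y Y = B X X := by
    simp only [hYdef, map_smul, LinearMap.smul_apply, smul_eq_mul]
    have : t * (t * B Y₀ Y₀) = t ^ 2 * B Y₀ Y₀ := by ring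
    rw [this, ht2]
    exact div_mul_cancel₀ _ (ne_of_lt hY₀Y₀)
  have hXY : B X Y = 0 := by
    simp only [hYdef, map_smul, smul_eq_mul, hXY₀, mul_zero]
  have hYz : B Y z = 0 := by
    simp only [hYdef, map_smul, LinearMap.smul_apply, smul_eq_mul, hY₀z, mul_zero]
  -- independence of (X, Y)
  have hindXY : LinearIndependent ℝ ![X, Y] := by
    rw [LinearIndependent.pair_iff]
    intro s u hsu
    have h1 : B (s • X + u • Y) z = 0 := by rw [hsu]; simp
    simp only [map_add, map_smul, LinearMap.add_apply, LinearMap.smul_apply, smul_eq_mul,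
      hXz, hYz, mul_one, mul_zero, add_zero] at h1
    subst h1
    rw [zero_smul, zero_add] at hsu
    rcases smul_eq_zero.mp hsu with h | h
    · exact ⟨rfl, h⟩
    · exact absurd h hYne
  refine ⟨X, Y, hXv, hYv, hYne, hYY.symm, hXY, hXz, hYz, hXX, hindXY,
    hspan X Y hXv hYv hindXY, ?_⟩
  -- uniqueness
  intro X' Y' hX'v hY'v hQ hO h1 h0
  have hBYY : B Y Y < 0 := by rw [hYY]; exact hXX
  obtain ⟨s, hs⟩ := hdep Y' Y hY'v hYv h0 hYz hYne
  by_cases hs0 : s = 0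
  · exfalso
    rw [hs0, zero_smul] at hs
    rw [hs] at hQ
    simp only [map_zero, LinearMap.zero_apply] at hQ
    have : X' = 0 := hzero X' hX'v hQ
    rw [this] at h1
    simp at h1
  · -- X' = X
    have hX'Y : B X' Y = 0 := by
      rw [hs] at hO
      simp only [map_smul, smul_eq_mul] at hO
      rcases mul_eq_zero.mp hO with h | h
      · exact absurd h hs0
      · exact h
    have hdX : X' - X ∈ v := Submodule.sub_mem v hX'v hXv
    have hdz : B (X' - X) z = 0 := by
      simp only [map_sub, LinearMap.sub_apply, h1, hXz, sub_self]
    obtain ⟨u, hu⟩ := hdep (X' - X) Y hdX hYv hdz hYz hYne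
    have hdY : B (X' - X) Y = 0 := by
      simp only [map_sub, LinearMap.sub_apply, hX'Y, hXY, sub_self]
    rw [hu] at hdY
    simp only [map_smul, LinearMap.smul_apply, smul_eq_mul] at hdY
    have hu0 : u = 0 := by
      rcases mul_eq_zero.mp hdY with h | h
      · exact h
      · exact absurd h (ne_of_lt hBYY)
    rw [hu0, zero_smul] at hu
    have hX'eq : X' = X := by
      have := sub_eq_zero.mp hu
      exact this
    refine ⟨hX'eq, ?_⟩
    -- s = ±1
    have hQ' : B Y' Y' = B Y Y := by
      rw [← hQ, hX'eq, ← hYY]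
    rw [hs] at hQ'
    simp only [map_smul, LinearMap.smul_apply, smul_eq_mul] at hQ'
    have hs2 : (s - 1) * (s + 1) * B Y Y = 0 := by linear_combination hQ'
    have hs2' : (s - 1) * (s + 1) = 0 := by
      rcases mul_eq_zero.mp hs2 with h | h
      · exact h
      · exact absurd h (ne_of_lt hBYY)
    rcases mul_eq_zero.mp hs2' with h | h
    · left
      rw [hs, sub_eq_zero.mp h, one_smul]
    · right
      have : s = -1 := by linarith
      rw [hs, this, neg_one_smul]
end

section
/- Let V be a finite-dimensional real vector space (with its canonical topology) equipped with a symmetric bilinear form B. Let d ≥ 1 be an integer, let ω_1, …, ω_d ∈ V satisfy B(ω_i, ω_j) < 0 for all 1 ≤ i, j ≤ d, and let M ⊆ V be a compact subset. For b = (b_1,…,b_d) with all b_j ≥ 0 and y ∈ M, write Y_σ = Σ_{j=1}^d b_j ω_j and Y = Y_σ + y. Then: (i) for every real m there exists R > 0 such that −B(Y,Y) > 2m whenever max_j b_j > R and y ∈ M; (ii) for every δ > 0 there exists R > 0 such that whenever max_j b_j > R and y ∈ M one has −B(Y_σ,Y_σ) > 0, −B(Y,Y) > 0, and | log(−B(Y,Y))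 − log(−B(Y_σ,Y_σ)) | < δ. -/
set_option maxHeartbeats 1000000

/-- Let `V` be a finite-dimensional real vector space with a symmetric
bilinear form `B`, let `ω_1, …, ω_d` (`d ≥ 1`) satisfy `B(ω_i,ω_j) < 0` for all `i,j`,
and let `M ⊆ V` be compact. Writing `Y_σ = Σ b_j ω_j` and `Y = Y_σ + y` for `b_j ≥ 0`
and `y ∈ M`: (i) for every real `m` there is `R > 0` such that `−B(Y,Y) > 2m` whenever
`max_j b_j > R`; (ii) for every `δ > 0` there is `R > 0` such that whenever
`max_j b_j > R` one has `−B(Y_σ,Y_σ) > 0`, `−B(Y,Y) > 0`, and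
`|log(−B(Y,Y)) − log(−B(Y_σ,Y_σ))| < δ`. -/
theorem stmt_13 {V : Type*} [NormedAddCommGroup V] [NormedSpace ℝ V]
    [FiniteDimensional ℝ V]
    (B : LinearMap.BilinForm ℝ V) (hBsymm : ∀ x y : V, B x y = B y x)
    (d : ℕ) (hd : 1 ≤ d) (ω : Fin d → V) (hω : ∀ i j, B (ω i) (ω j) < 0)
    (M : Set V) (hM : IsCompact M) :
    (∀ m : ℝ, ∃ R : ℝ, 0 < R ∧ ∀ b : Fin d → ℝ, (∀ j, 0 ≤ b j) → ∀ y ∈ M,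
      (∃ j, R < b j) →
      2 * m < -B ((∑ j, b j • ω j) + y) ((∑ j, b j • ω j) + y)) ∧
    (∀ δ : ℝ, 0 < δ → ∃ R : ℝ, 0 < R ∧ ∀ b : Fin d → ℝ, (∀ j, 0 ≤ b j) → ∀ y ∈ M,
      (∃ j, R < b j) →
      0 < -B (∑ j, b j • ω j) (∑ j, b j • ω j) ∧
      0 < -B ((∑ j, b j • ω j) + y) ((∑ j, b j • ω j) + y) ∧
      |Real.log (-B ((∑ j, b j • ω j) + y) ((∑ j, b j • ω j) + y)) -
        Real.log (-B (∑ j, b j • ω j) (∑ j, b j • ω j))| < δ) := by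
  classical
  haveI : Nonempty (Fin d) := ⟨⟨0, hd⟩⟩
  obtain ⟨C, hC0, hC⟩ : ∃ C : ℝ, 0 ≤ C ∧ ∀ x y : V, |B x y| ≤ C * ‖x‖ * ‖y‖ := by
    set φ : V →L[ℝ] V →L[ℝ] ℝ :=
      LinearMap.toContinuousLinearMap
        ((LinearMap.toContinuousLinearMap :
            (V →ₗ[ℝ] ℝ) ≃ₗ[ℝ] (V →L[ℝ] ℝ)).toLinearMap.comp B)
    refine ⟨‖φ‖, ContinuousLinearMap.opNorm_nonneg φ, fun x y => ?_⟩
    calc |B x y| = ‖(φ x) y‖ := by simp [φ, Real.norm_eq_abs]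
      _ ≤ ‖φ x‖ * ‖y‖ := (φ x).le_opNorm y
      _ ≤ ‖φ‖ * ‖x‖ * ‖y‖ := by
          have := φ.le_opNorm x
          nlinarith [norm_nonneg y, norm_nonneg x, norm_nonneg (φ x)]
  obtain ⟨K, hK1, hK⟩ : ∃ K : ℝ, 1 ≤ K ∧ ∀ y ∈ M, ‖y‖ ≤ K := by
    obtain ⟨r, hr⟩ := hM.isBounded.subset_closedBall 0
    refine ⟨max r 1, le_max_right _ _, fun y hy => ?_⟩
    have := hr hy
    simp [Metric.mem_closedBall, dist_eq_norm] at this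
    exact this.trans (le_max_left _ _)
  have hK0 : (0:ℝ) ≤ K := le_trans zero_le_one hK1
  set W : ℝ := ∑ j, ‖ω j‖ with hWdef
  have hW0 : 0 ≤ W := Finset.sum_nonneg fun j _ => norm_nonneg _
  set ε : ℝ := Finset.univ.inf' Finset.univ_nonempty
      (fun p : Fin d × Fin d => -B (ω p.1) (ω p.2)) with hεdef
  have hε : 0 < ε := by
    rw [hεdef, Finset.lt_inf'_iff]
    intro p _
    simpa using hω p.1 p.2
  have hεle : ∀ i j, ε ≤ -B (ω i) (ω j) := fun i j =>
    Finset.inf'_le _ (Finset.mem_univ (i, j))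
  set D : ℝ := C * (2 * W * K + K * K) + 1 with hDdef
  have hD1 : 1 ≤ D := by
    have h1 : 0 ≤ 2 * W * K + K * K := by nlinarith
    have := mul_nonneg hC0 h1
    rw [hDdef]; linarith
  -- common key estimates
  have key : ∀ b : Fin d → ℝ, (∀ j, 0 ≤ b j) → ∀ y ∈ M,
      ε * (∑ j, b j) ^ 2 ≤ -B (∑ j, b j • ω j) (∑ j, b j • ω j) ∧
      (1 ≤ ∑ j, b j →
        |B ((∑ j, b j • ω j) + y) ((∑ j, b j • ω j) + y)
          - B (∑ j, b j • ω j) (∑ j, b j • ω j)| ≤ D * (∑ j, b j)) := by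
    intro b hb y hy
    set s : V := ∑ j, b j • ω j with hsdef
    set S : ℝ := ∑ j, b j with hSdef
    have hS0 : 0 ≤ S := Finset.sum_nonneg fun j _ => hb j
    have hbS : ∀ j, b j ≤ S := fun j =>
      Finset.single_le_sum (fun i _ => hb i) (Finset.mem_univ j)
    have hns : ‖s‖ ≤ S * W := by
      calc ‖s‖ ≤ ∑ j, ‖b j • ω j‖ := norm_sum_le _ _
        _ = ∑ j, b j * ‖ω j‖ := by
            refine Finset.sum_congr rfl fun j _ => ?_
            rw [norm_smul, Real.norm_eq_abs, abs_of_nonneg (hb j)]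
        _ ≤ ∑ j, S * ‖ω j‖ := Finset.sum_le_sum fun j _ =>
            mul_le_mul_of_nonneg_right (hbS j) (norm_nonneg _)
        _ = S * W := by rw [hWdef, Finset.mul_sum]
    constructor
    · have hexp : B s s = ∑ x, ∑ i, b x * (b i * B (ω i) (ω x)) := by
        simp [hsdef, map_sum, LinearMap.sum_apply, map_smul, LinearMap.smul_apply,
          smul_eq_mul, Finset.mul_sum]
      have h1 : ε * S ^ 2 = ∑ x, ∑ i, b x * (b i * ε) := by
        rw [hSdef, sq, Finset.sum_mul_sum, Finset.mul_sum]
        refine Finset.sum_congr rfl fun x _ => ?_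
        rw [Finset.mul_sum]
        exact Finset.sum_congr rfl fun i _ => by ring
      have h2 : -B s s = ∑ x, ∑ i, b x * (b i * (-B (ω i) (ω x))) := by
        rw [hexp, ← Finset.sum_neg_distrib]
        refine Finset.sum_congr rfl fun x _ => ?_
        rw [← Finset.sum_neg_distrib]
        exact Finset.sum_congr rfl fun i _ => by ring
      rw [h1, h2]
      refine Finset.sum_le_sum fun x _ => Finset.sum_le_sum fun i _ => ?_
      have h := hεle i x
      have hq := mul_nonneg (mul_nonneg (hb x) (hb i)) (sub_nonneg.mpr h)
      nlinarith [hq]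
    · intro hS1
      have hexp : B (s + y) (s + y) - B s s = B s y + B y s + B y y := by
        simp [map_add, LinearMap.add_apply]; ring
      have hyK : ‖y‖ ≤ K := hK y hy
      have h1 : |B s y| ≤ C * (S * W) * K := by
        calc |B s y| ≤ C * ‖s‖ * ‖y‖ := hC s y
          _ ≤ C * (S * W) * K :=
            mul_le_mul (mul_le_mul_of_nonneg_left hns hC0) hyK (norm_nonneg y)
              (mul_nonneg hC0 (mul_nonneg hS0 hW0))
      have h2 : |B y s| ≤ C * (S * W) * K := by rw [hBsymm y s]; exact h1
      have h3 : |B y y| ≤ C * K * K := by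
        calc |B y y| ≤ C * ‖y‖ * ‖y‖ := hC y y
          _ ≤ C * K * K :=
            mul_le_mul (mul_le_mul_of_nonneg_left hyK hC0) hyK (norm_nonneg y)
              (mul_nonneg hC0 hK0)
      rw [hexp]
      calc |B s y + B y s + B y y| ≤ |B s y| + |B y s| + |B y y| :=
            (abs_add_le _ _).trans (add_le_add_left (abs_add_le _ _) _)
        _ ≤ C * (S * W) * K + C * (S * W) * K + C * K * K := by linarith
        _ ≤ D * S := by
            rw [hDdef]
            nlinarith [mul_nonneg (mul_nonneg hC0 (mul_nonneg hK0 hK0))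
              (by linarith : (0:ℝ) ≤ S - 1)]
  constructor
  · -- part (i)
    intro m
    refine ⟨max 1 ((D + 2 * |m| + 1) / ε), lt_of_lt_of_le one_pos (le_max_left _ _),
      fun b hb y hy hj => ?_⟩
    obtain ⟨j, hj⟩ := hj
    obtain ⟨k1, k2⟩ := key b hb y hy
    set S : ℝ := ∑ i, b i with hSdef
    have hbS : b j ≤ S := by
      rw [hSdef]; exact Finset.single_le_sum (fun i _ => hb i) (Finset.mem_univ j)
    have hSR : max 1 ((D + 2 * |m| + 1) / ε) < S := lt_of_lt_of_le hj hbS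
    have hS1 : 1 < S := lt_of_le_of_lt (le_max_left _ _) hSR
    have hSX : D + 2 * |m| + 1 < ε * S := by
      have h := lt_of_le_of_lt (le_max_right _ _) hSR
      rw [div_lt_iff₀ hε] at h
      linarith
    have k2' := abs_le.mp (k2 hS1.le)
    have h3 : 0 ≤ (S - 1) * (ε * S - D) :=
      mul_nonneg (by linarith) (by linarith [abs_nonneg m])
    nlinarith [le_abs_self m]
  · -- part (ii)
    intro δ hδ
    set η : ℝ := 1 - Real.exp (-δ) with hηdef
    have hη0 : 0 < η := by
      have : Real.exp (-δ) < 1 := Real.exp_lt_one_iff.mpr (by linarith)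
      rw [hηdef]; linarith
    have hη1 : η < 1 := by
      have := Real.exp_pos (-δ)
      rw [hηdef]; linarith
    refine ⟨max 1 (D / (ε * η)), lt_of_lt_of_le one_pos (le_max_left _ _),
      fun b hb y hy hj => ?_⟩
    obtain ⟨j, hj⟩ := hj
    obtain ⟨k1, k2⟩ := key b hb y hy
    set S : ℝ := ∑ i, b i with hSdef
    have hbS : b j ≤ S := by
      rw [hSdef]; exact Finset.single_le_sum (fun i _ => hb i) (Finset.mem_univ j)
    have hSR : max 1 (D / (ε * η)) < S := lt_of_lt_of_le hj hbS
    have hS1 : 1 < S := lt_of_le_of_lt (le_max_left _ _) hSR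
    have hSX : D < ε * η * S := by
      have h := lt_of_le_of_lt (le_max_right _ _) hSR
      rw [div_lt_iff₀ (mul_pos hε hη0)] at h
      linarith
    have k2' := k2 hS1.le
    set a : ℝ := -B ((∑ j, b j • ω j) + y) ((∑ j, b j • ω j) + y) with hadef
    set b0 : ℝ := -B (∑ j, b j • ω j) (∑ j, b j • ω j) with hb0def
    have hb0 : 0 < b0 :=
      lt_of_lt_of_le (mul_pos hε (pow_pos (by linarith) 2)) k1
    have habs : |a - b0| < η * b0 := by
      have e2 : a - b0 = -(B ((∑ j, b j • ω j) + y) ((∑ j, b j • ω j) + y)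
          - B (∑ j, b j • ω j) (∑ j, b j • ω j)) := by
        rw [hadef, hb0def]; ring
      rw [e2, abs_neg]
      have p1 : D * S < ε * η * S * S :=
        mul_lt_mul_of_pos_right hSX (by linarith)
      have p2 : η * (ε * S ^ 2) ≤ η * b0 := mul_le_mul_of_nonneg_left k1 hη0.le
      nlinarith [k2']
    obtain ⟨hl, hr⟩ := abs_lt.mp habs
    have hlow : (1 - η) * b0 < a := by nlinarith
    have hup : a < (1 + η) * b0 := by nlinarith
    have hposlow : (0:ℝ) < (1 - η) * b0 := mul_pos (by linarith) hb0
    have ha : 0 < a := lt_trans hposlow hlow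
    refine ⟨hb0, ha, ?_⟩
    have h1η : (1 : ℝ) - η = Real.exp (-δ) := by rw [hηdef]; ring
    rw [abs_lt]
    constructor
    · have h := Real.log_lt_log hposlow hlow
      rw [Real.log_mul (by linarith : (1:ℝ) - η ≠ 0) (ne_of_gt hb0), h1η,
        Real.log_exp] at h
      linarith
    · have h := Real.log_lt_log ha hup
      rw [Real.log_mul (by linarith : (1:ℝ) + η ≠ 0) (ne_of_gt hb0)] at h
      have h2 : Real.log (1 + η) < η := by
        have := Real.log_lt_sub_one_of_pos (by linarith : (0:ℝ) < 1 + η)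
          (ne_of_gt (by linarith : (1:ℝ) < 1 + η))
        linarith
      have hηδ : η ≤ δ := by
        have := Real.add_one_le_exp (-δ)
        rw [hηdef]; linarith
      linarith
end

section
/- Let V be a finite-dimensional real vector space with a symmetric bilinear form B, write Q(x) = B(x,x), and assume V = P ⊕ N is an orthogonal direct sum decomposition with Q(p) > 0 for every nonzero p ∈ P, Q(q) < 0 for every nonzero q ∈ N, and dim N = 1 (so B is Lorentzian, of signature (dim P, 1)). Let L ⊆ V be the ℤ-span of an ℝ-basis of V (a full lattice), and let ω ∈ V satisfy Q(ω) < 0. Then the set of linear automorphisms g of V such that B(gx, gy) = B(x,y) for all x,y ∈ V, g(L) = L, and g(ω) = ω, is finite. -/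
set_option maxHeartbeats 1000000 in
/-- Let `V` be a finite-dimensional real Lorentzian quadratic space
(orthogonal decomposition `V = P ⊕ N` with `B` positive definite on `P`, negative
definite on `N`, `dim N = 1`), let `L` be the ℤ-span of an ℝ-basis of `V`, and let
`ω ∈ V` have negative norm. Then the set of linear automorphisms of `V` preserving
`B`, mapping `L` onto `L`, and fixing `ω` is finite. -/
theorem stmt_15 {V : Type*} [AddCommGroup V] [Module ℝ V] [FiniteDimensional ℝ V]
    (B : LinearMap.BilinForm ℝ V) (hBsymm : ∀ x y : V, B x y = B y x)
    (P N : Submodule ℝ V) (hcompl : IsCompl P N)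
    (horth : ∀ p ∈ P, ∀ q ∈ N, B p q = 0)
    (hP : ∀ p ∈ P, p ≠ 0 → 0 < B p p)
    (hN : ∀ q ∈ N, q ≠ 0 → B q q < 0)
    (hdimN : Module.finrank ℝ N = 1)
    {ι : Type*} (bV : Module.Basis ι ℝ V)
    (ω : V) (hω : B ω ω < 0) :
    {g : V ≃ₗ[ℝ] V |
      (∀ x y : V, B (g x) (g y) = B x y) ∧
      (⇑g '' ((Submodule.span ℤ (Set.range ⇑bV) : Submodule ℤ V) : Set V) =
        ((Submodule.span ℤ (Set.range ⇑bV) : Submodule ℤ V) : Set V)) ∧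
      g ω = ω}.Finite := by
  classical
  haveI : Fintype ι := FiniteDimensional.fintypeBasisIndex bV
  have hωne : B ω ω ≠ 0 := ne_of_lt hω
  -- Step 1: B is positive definite on the orthogonal complement of ω
  have key : ∀ w : V, B ω w = 0 → w ≠ 0 → 0 < B w w := by
    intro w hwperp hwne
    by_contra hcon
    push_neg at hcon
    -- ω and w are linearly independent
    have hωne0 : ω ≠ 0 := by
      intro h; rw [h] at hω; simp at hω
    have hli : LinearIndependent ℝ ![ω, w] := by
      rw [LinearIndependent.pair_iff]
      intro s t hst
      have h1 : B ω (s • ω + t • w) = 0 := by rw [hst]; simp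
      rw [map_add, map_smul, map_smul, hwperp] at h1
      simp only [smul_eq_mul, mul_zero, add_zero] at h1
      have hs : s = 0 := by
        rcases mul_eq_zero.mp h1 with h | h
        · exact h
        · exact absurd h hωne
      refine ⟨hs, ?_⟩
      rw [hs, zero_smul, zero_add] at hst
      rcases smul_eq_zero.mp hst with h | h
      · exact h
      · exact absurd h hwne
    set W : Submodule ℝ V := Submodule.span ℝ (Set.range ![ω, w]) with hW
    have hWrank : Module.finrank ℝ W = 2 := by
      rw [hW, finrank_span_eq_card hli, Fintype.card_fin]
    -- W is disjoint from P
    have hdisj : Disjoint W P := by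
      rw [Submodule.disjoint_def]
      intro x hxW hxP
      by_contra hxne
      have hxpos := hP x hxP hxne
      rcases (Submodule.mem_span_range_iff_exists_fun (R := ℝ)).mp hxW with ⟨c, hc⟩
      rw [Fin.sum_univ_two] at hc
      simp only [Matrix.cons_val_zero, Matrix.cons_val_one, Matrix.head_cons] at hc
      have hwω : B w ω = 0 := by rw [hBsymm]; exact hwperp
      have hxx : B x x = c 0 * c 0 * B ω ω + c 1 * c 1 * B w w := by
        rw [← hc]
        simp only [map_add, map_smul, LinearMap.add_apply, LinearMap.smul_apply, smul_eq_mul,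
          hwperp, hwω]
        ring
      have h1 : c 0 * c 0 * B ω ω ≤ 0 :=
        mul_nonpos_of_nonneg_of_nonpos (mul_self_nonneg _) (le_of_lt hω)
      have h2 : c 1 * c 1 * B w w ≤ 0 :=
        mul_nonpos_of_nonneg_of_nonpos (mul_self_nonneg _) hcon
      linarith
    have hsum := Submodule.finrank_sup_add_finrank_inf_eq W P
    rw [hdisj.eq_bot, finrank_bot, add_zero] at hsum
    have hle : Module.finrank ℝ ↥(W ⊔ P) ≤ Module.finrank ℝ V := Submodule.finrank_le _
    have htot : Module.finrank ℝ P + Module.finrank ℝ N = Module.finrank ℝ V :=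
      Submodule.finrank_add_eq_of_isCompl hcompl
    omega
  -- Step 2: build positive definite bilinear form B'
  set B' : LinearMap.BilinForm ℝ V :=
    B - (2 / B ω ω) • ((B.flip ω).smulRight (B.flip ω)) with hB'def
  have hB'apply : ∀ x y : V, B' x y = B x y - 2 / B ω ω * (B x ω * B y ω) := by
    intro x y
    simp [hB'def, LinearMap.sub_apply, LinearMap.smul_apply, LinearMap.smulRight_apply,
      LinearMap.flip_apply, smul_eq_mul]
    try ring
  have hB'pos : ∀ x : V, x ≠ 0 → 0 < B' x x := by
    intro x hxne
    obtain ⟨c, hcω⟩ : ∃ c : ℝ, c * B ω ω = B x ω :=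
      ⟨B x ω / B ω ω, div_mul_cancel₀ _ hωne⟩
    obtain ⟨w, hxw⟩ : ∃ w : V, x = c • ω + w := ⟨x - c • ω, by abel⟩
    have hwperp : B ω w = 0 := by
      have h1 : B ω x = c * B ω ω + B ω w := by
        rw [hxw, map_add, map_smul, smul_eq_mul]
      rw [hBsymm ω x] at h1
      linarith [hcω]
    have hwω : B w ω = 0 := by rw [hBsymm]; exact hwperp
    have hBxx : B x x = c * c * B ω ω + B w w := by
      conv_lhs => rw [hxw]
      simp only [map_add, map_smul, LinearMap.add_apply, LinearMap.smul_apply, smul_eq_mul,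
        hwperp, hwω]
      ring
    have hBxω : B x ω = c * B ω ω := by
      conv_lhs => rw [hxw]
      simp only [map_add, map_smul, LinearMap.add_apply, LinearMap.smul_apply, smul_eq_mul, hwω]
      ring
    have hB'xx : B' x x = B w w - c * c * B ω ω := by
      rw [hB'apply, hBxx, hBxω]
      field_simp
      ring
    rcases eq_or_ne w 0 with hw0 | hw0
    · have hcne : c ≠ 0 := by
        intro hc0
        apply hxne
        rw [hxw, hw0, hc0, zero_smul, add_zero]
      clear hxw
      rw [hB'xx, hw0]
      simp only [map_zero, LinearMap.zero_apply, zero_sub]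
      nlinarith [mul_self_pos.mpr hcne]
    · have hww : 0 < B w w := key w hwperp hw0
      have : 0 ≤ -(c * c * B ω ω) := by nlinarith [mul_self_nonneg c]
      rw [hB'xx]; linarith
  have hB'nonneg : ∀ x : V, 0 ≤ B' x x := by
    intro x
    rcases eq_or_ne x 0 with h | h
    · rw [h]; simp
    · exact le_of_lt (hB'pos x h)
  have hB'symm : ∀ x y : V, B' x y = B' y x := by
    intro x y; rw [hB'apply, hB'apply, hBsymm x y]; ring
  -- Cauchy-Schwarz for B'
  have hCS : ∀ x y : V, (B' x y) ^ 2 ≤ B' x x * B' y y := by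
    intro x y
    have hquad : ∀ t : ℝ, 0 ≤ B' y y * (t * t) + (2 * B' x y) * t + B' x x := by
      intro t
      have := hB'nonneg (x + t • y)
      simp only [map_add, map_smul, LinearMap.add_apply, LinearMap.smul_apply, smul_eq_mul] at this
      rw [hB'symm y x] at this
      nlinarith [this]
    have := discrim_le_zero hquad
    rw [discrim] at this
    nlinarith [this]
  -- B' is nondegenerate
  have hB'nd : B'.Nondegenerate := by
    refine ⟨fun x hx => ?_, fun x hx => ?_⟩ <;>
    · by_contra hxne
      have := hB'pos x hxne
      rw [hx] at this
      simp at this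
  -- dual basis with respect to B'
  set d : Module.Basis ι ℝ V := B'.dualBasis hB'nd bV with hd
  have hdual : ∀ i j, B' (d i) (bV j) = if j = i then 1 else 0 := fun i j =>
    B'.apply_dualBasis_left hB'nd bV i j
  -- constants
  set C : ℝ := ∑ j, B' (bV j) (bV j) with hC
  set D : ℝ := ∑ j, B' (d j) (d j) with hD
  have hCnn : 0 ≤ C := Finset.sum_nonneg fun j _ => hB'nonneg _
  have hDnn : 0 ≤ D := Finset.sum_nonneg fun j _ => hB'nonneg _
  have hCle : ∀ i, B' (bV i) (bV i) ≤ C := fun i =>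
    Finset.single_le_sum (fun j _ => hB'nonneg (bV j)) (Finset.mem_univ i)
  have hDle : ∀ i, B' (d i) (d i) ≤ D := fun i =>
    Finset.single_le_sum (fun j _ => hB'nonneg (d j)) (Finset.mem_univ i)
  set K : ℝ := D * C with hK
  have hKnn : 0 ≤ K := mul_nonneg hDnn hCnn
  set M : ℤ := ⌈K⌉ with hM
  have hMnn : 0 ≤ M := Int.ceil_nonneg hKnn
  -- the set of lattice points of bounded norm is finite
  set S : Set V :=
    {v : V | v ∈ Submodule.span ℤ (Set.range ⇑bV) ∧ B' v v ≤ C} with hS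
  have hSfin : S.Finite := by
    have hFfin : (Set.pi Set.univ (fun _ : ι => Set.Icc (-M) M)).Finite :=
      Set.Finite.pi fun _ => Set.finite_Icc _ _
    refine Set.Finite.subset
      (hFfin.image (fun n : ι → ℤ => ∑ i, (n i : ℝ) • bV i)) ?_
    rintro v ⟨hvL, hvC⟩
    obtain ⟨n, hn⟩ := (Submodule.mem_span_range_iff_exists_fun (R := ℤ)).mp hvL
    have hv' : ∑ i, (n i : ℝ) • bV i = v := by
      rw [← hn]
      exact Finset.sum_congr rfl fun i _ => by
        rw [Int.cast_smul_eq_zsmul]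
    have hni : ∀ i, B' (d i) v = (n i : ℝ) := by
      intro i
      rw [← hv', map_sum]
      simp only [map_smul, smul_eq_mul, hdual, mul_ite, mul_one, mul_zero]
      simp
    refine ⟨n, fun i _ => ?_, hv'⟩
    have hsq : ((n i : ℝ)) ^ 2 ≤ K := by
      rw [← hni i]
      calc (B' (d i) v) ^ 2 ≤ B' (d i) (d i) * B' v v := hCS _ _
        _ ≤ D * C := mul_le_mul (hDle i) hvC (hB'nonneg v) hDnn
    have habs : (|n i| : ℝ) ≤ K := by
      rcases eq_or_ne (n i) 0 with h0 | h0
      · rw [h0]; simpa using hKnn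
      · have h1 : (1 : ℤ) ≤ |n i| := Int.one_le_abs h0
        have h2 : (|n i| : ℝ) ≤ (|n i| : ℝ) ^ 2 := by
          have : (1 : ℝ) ≤ (|n i| : ℝ) := by exact_mod_cast h1
          nlinarith
        rw [show ((|n i| : ℝ)) ^ 2 = ((n i : ℝ)) ^ 2 by push_cast [sq_abs]; ring] at h2
        linarith
    have habs' : |n i| ≤ M := by
      have : (|n i| : ℝ) ≤ (M : ℝ) := le_trans habs (Int.le_ceil K)
      exact_mod_cast this
    rw [Set.mem_Icc]
    exact abs_le.mp habs'
  -- the map g ↦ (g (bV i))_i is injective with image in a finite set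
  refine Set.Finite.of_finite_image (f := fun g : V ≃ₗ[ℝ] V => fun i => g (bV i)) ?_ ?_
  · refine Set.Finite.subset (Set.Finite.pi fun _ : ι => hSfin) ?_
    rintro _ ⟨g, ⟨hgB, hgL, hgω⟩, rfl⟩
    intro i _
    constructor
    · have hmem : g (bV i) ∈ ⇑g '' ((Submodule.span ℤ (Set.range ⇑bV) : Submodule ℤ V) : Set V) :=
        Set.mem_image_of_mem _ (Submodule.subset_span ⟨i, rfl⟩)
      rw [hgL] at hmem
      exact hmem
    · have hgω' : ∀ x : V, B (g x) ω = B x ω := by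
        intro x
        have := hgB x ω
        rw [hgω] at this
        exact this
      have h1 : B' (g (bV i)) (g (bV i)) = B' (bV i) (bV i) := by
        rw [hB'apply, hB'apply, hgB, hgω']
      rw [h1]
      exact hCle i
  · intro g _ g' _ h
    apply LinearEquiv.toLinearMap_injective
    exact bV.ext fun i => congrFun h i
end

section
/- Let V be a finite-dimensional vector space over ℚ with a nondegenerate symmetric bilinear form b, let L ⊆ V be the ℤ-span of a ℚ-basis of V (a full lattice) with b(ℓ,ℓ') ∈ ℤ for all ℓ,ℓ' ∈ L, and let L* = {x ∈ V | b(x,ℓ) ∈ ℤ for all ℓ ∈ L} be the dual lattice. Let z ∈ L be a nonzero primitive vector (L/ℤz torsion-free) with b(z,z) = 0, and set I^⊥ = {x ∈ V | b(x,z) = 0}, K = (I^⊥ ∩ L)/ℤz, and K_ℚ = I^⊥/ℚz with the induced bilinear form b̄ (well defined since b(z,x) = 0 for x ∈ I^⊥). Then under the quotient map π : I^⊥ → K_ℚ, the image of I^⊥ ∩ L* is exactly the dual lattice {η ∈ K_ℚ | b̄(η,κ) ∈ ℤ for all κ ∈ K} of K, and the kernel of π restricted to I^⊥ ∩ L* is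 ℚz ∩ L*. In particular the dual lattice of K is isomorphic to (I^⊥ ∩ L*)/(ℚz ∩ L*). -/
/-- Let `V` be a finite-dimensional ℚ-vector space with a nondegenerate
symmetric bilinear form `b`, `L ⊆ V` the ℤ-span of a ℚ-basis with `b` integer valued
on `L`, and `L* = {x | b(x,L) ⊆ ℤ}` the dual lattice. Let `z ∈ L` be a nonzero
primitive isotropic vector, `I^⊥ = {x | b(x,z) = 0}`, `K = (I^⊥ ∩ L)/ℤz` inside
`K_ℚ = I^⊥/ℚz` with induced form. Then under the quotient map `π : I^⊥ → K_ℚ`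
(enccoded here via lifts: `π u = π x` iff `u = x + q·z` for some `q ∈ ℚ`), the image of
`I^⊥ ∩ L*` is exactly the dual lattice of `K`, and the kernel of `π` restricted to
`I^⊥ ∩ L*` is `ℚz ∩ L*`. -/
theorem stmt_18 {V : Type*} [AddCommGroup V] [Module ℚ V] [FiniteDimensional ℚ V]
    (b : LinearMap.BilinForm ℚ V) (hbsymm : ∀ x y : V, b x y = b y x)
    (hbnondeg : ∀ x : V, (∀ y : V, b x y = 0) → x = 0)
    {ι : Type*} (bV : Module.Basis ι ℚ V)
    (L : Submodule ℤ V) (hL : L = Submodule.span ℤ (Set.range ⇑bV))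
    (hint : ∀ x ∈ L, ∀ y ∈ L, ∃ n : ℤ, b x y = (n : ℚ))
    (z : V) (hz0 : z ≠ 0) (hzL : z ∈ L) (hzz : b z z = 0)
    (hzprim : ∀ x ∈ L, ∀ n : ℤ, n ≠ 0 →
      (∃ m : ℤ, n • x = m • z) → ∃ m : ℤ, x = m • z) :
    (∀ u : V, b u z = 0 →
      ((∀ x : V, b x z = 0 → x ∈ L → ∃ n : ℤ, b u x = (n : ℚ)) ↔
        (∃ x : V, b x z = 0 ∧ (∀ l ∈ L, ∃ n : ℤ, b x l = (n : ℚ)) ∧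
          ∃ q : ℚ, u = x + q • z))) ∧
    ({x : V | (b x z = 0 ∧ ∀ l ∈ L, ∃ n : ℤ, b x l = (n : ℚ)) ∧ ∃ q : ℚ, x = q • z} =
      {x : V | (∃ q : ℚ, x = q • z) ∧ ∀ l ∈ L, ∃ n : ℤ, b x l = (n : ℚ)}) := by
  -- The submodule of ℤ of values b l z for l ∈ L
  set J : Submodule ℤ ℤ :=
    { carrier := {n : ℤ | ∃ l ∈ L, b l z = (n : ℚ)}
      zero_mem' := ⟨0, L.zero_mem, by simp⟩
      add_mem' := by
        rintro m n ⟨l, hl, hlm⟩ ⟨l', hl', hln⟩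
        exact ⟨l + l', L.add_mem hl hl', by push_cast; simp [hlm, hln]⟩
      smul_mem' := by
        rintro c n ⟨l, hl, hln⟩
        refine ⟨c • l, L.smul_mem c hl, ?_⟩
        simp only [map_zsmul, LinearMap.smul_apply, hln, zsmul_eq_mul, smul_eq_mul]
        push_cast
        ring } with hJ
  obtain ⟨d, hd⟩ : Submodule.IsPrincipal J := inferInstance
  have hdmem : (d : ℤ) ∈ J := hd ▸ Submodule.mem_span_singleton_self d
  obtain ⟨w, hwL, hwz⟩ := hdmem
  have hd0 : d ≠ 0 := by
    intro h0
    -- then b l z = 0 for all l ∈ L, hence for all of V, contradicting nondegeneracy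
    have hall : ∀ l ∈ L, b l z = 0 := by
      intro l hl
      obtain ⟨n, hn⟩ := hint l hl z hzL
      have hnJ : n ∈ J := ⟨l, hl, hn⟩
      rw [hd, h0, Submodule.mem_span_singleton] at hnJ
      obtain ⟨c, hc⟩ := hnJ
      simp at hc
      rw [hn, ← hc]; simp
    have hflip : (b.flip) z = 0 := by
      apply Module.Basis.ext bV
      intro i
      have : bV i ∈ L := hL ▸ Submodule.subset_span ⟨i, rfl⟩
      simpa using hall _ this
    apply hz0
    apply hbnondeg
    intro y
    rw [hbsymm]
    have := congrFun (congrArg DFunLike.coe hflip) y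
    simpa using this
  refine ⟨?_, ?_⟩
  · intro u huz
    constructor
    · -- hard direction
      intro hdual
      set q : ℚ := b u w / (d : ℚ) with hq
      set x : V := u - q • z with hx
      have hdQ : (d : ℚ) ≠ 0 := Int.cast_ne_zero.mpr hd0
      have hexp : ∀ y : V, b x y = b u y - q * b z y := by
        intro y
        rw [hx]
        simp only [map_sub, map_smul, LinearMap.sub_apply, LinearMap.smul_apply,
          smul_eq_mul]
      refine ⟨x, ?_, ?_, q, by rw [hx]; abel⟩
      · rw [hexp, huz, hbsymm z, hzz]; ring
      · intro l hl
        obtain ⟨n, hn⟩ := hint l hl z hzL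
        have hnJ : n ∈ J := ⟨l, hl, hn⟩
        rw [hd, Submodule.mem_span_singleton] at hnJ
        obtain ⟨m, hm⟩ := hnJ
        have hl' : l - m • w ∈ L := L.sub_mem hl (L.smul_mem m hwL)
        have hlz' : b (l - m • w) z = 0 := by
          simp only [map_sub, map_zsmul, LinearMap.sub_apply, LinearMap.smul_apply,
            zsmul_eq_mul]
          rw [hn, hwz, ← hm, smul_eq_mul]
          push_cast
          ring
        obtain ⟨k, hk⟩ := hdual (l - m • w) hlz' hl'
        refine ⟨k, ?_⟩
        have hzw : b z w = (d : ℚ) := by rw [hbsymm]; exact hwz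
        have hbxw : b x w = 0 := by
          rw [hexp, hzw, hq]; field_simp; ring
        have hzl' : b z (l - m • w) = 0 := by rw [hbsymm]; exact hlz'
        have hbxl' : b x (l - m • w) = (k : ℚ) := by
          rw [hexp, hzl', hk]; ring
        calc b x l
            = b x (l - m • w) + (m : ℚ) * b x w := by
              rw [(b x).map_sub, (b x).map_smul_of_tower, zsmul_eq_mul]
              ring
          _ = (k : ℚ) := by rw [hbxl', hbxw]; ring
    · -- easy direction
      rintro ⟨x, hxz, hxdual, q, rfl⟩
      intro y hyz hyL
      obtain ⟨n, hn⟩ := hxdual y hyL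
      refine ⟨n, ?_⟩
      have hzy : b z y = 0 := by rw [hbsymm]; exact hyz
      simp [map_add, hn, hzy]
  · ext x
    simp only [Set.mem_setOf_eq]
    constructor
    · rintro ⟨⟨_, h2⟩, h3⟩
      exact ⟨h3, h2⟩
    · rintro ⟨⟨q, rfl⟩, h2⟩
      exact ⟨⟨by simp [hzz], h2⟩, q, rfl⟩
end
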